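/- Let V₀, W₀, g ∈ ℝ with g ≠ 0 and −(2 + V₀ + W₀²/9)/g > 0, set A = √(−(2 + V₀ + W₀²/9)/g), and define u : ℝ → ℂ by u(x) = A·sech(x)·exp(−i(W₀/3)·arctan(sinh(x))). Then u satisfies the stationary NLS equation with PT-symmetric Scarf-II potential and propagation constant μ = −1: −u''(x) + (V₀sech²(x) + iW₀sech(x)tanh(x))u(x) + g|u(x)|²u(x) + u(x) = 0 for all x ∈ ℝ. -/

import Mathlib

set_option maxHeartbeats 1000000


/-- The exact soliton of the stationary NLS equation with PT-symmetric Scarf-II potential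
`V(x) = V₀ sech²x + iW₀ sech x tanh x` and propagation constant `μ = −1`:
`u(x) = A sech(x) exp(−i(W₀/3) arctan(sinh x))` with `A = √(−(2 + V₀ + W₀²/9)/g)`. -/
theorem stmt_8 (V₀ W₀ g : ℝ) (hg : g ≠ 0) (hA : 0 < -(2 + V₀ + W₀ ^ 2 / 9) / g)
    (A : ℝ) (hAdef : A = Real.sqrt (-(2 + V₀ + W₀ ^ 2 / 9) / g))
    (u : ℝ → ℂ)
    (hu : ∀ x, u x = ((A * (1 / Real.cosh x) : ℝ) : ℂ)
      * Complex.exp (-Complex.I * (W₀ / 3) * Real.arctan (Real.sinh x))) :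
    ∀ x : ℝ,
      -deriv (deriv u) x
        + (((V₀ * (1 / Real.cosh x) ^ 2 : ℝ) : ℂ)
            + Complex.I * (W₀ : ℂ) * ((1 / Real.cosh x * Real.tanh x : ℝ) : ℂ)) * u x
        + (g : ℂ) * (‖u x‖ : ℂ) ^ 2 * u x + u x = 0 := by
  -- notation
  set k : ℂ := -Complex.I * ((W₀ : ℂ) / 3) with hk
  have hcosh : ∀ y : ℝ, Real.cosh y ≠ 0 := fun y => (Real.cosh_pos y).ne'
  have hcoshC : ∀ y : ℝ, ((Real.cosh y : ℝ) : ℂ) ≠ 0 := fun y => by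
    exact_mod_cast hcosh y
  -- u as an explicit function
  have hufun : u = fun t : ℝ => (A : ℂ) * ((Real.cosh t : ℝ) : ℂ)⁻¹
      * Complex.exp (k * ((Real.arctan (Real.sinh t) : ℝ) : ℂ)) := by
    funext t
    rw [hu t]
    have : (-Complex.I * ((W₀ : ℂ) / 3) * ((Real.arctan (Real.sinh t) : ℝ) : ℂ))
        = k * ((Real.arctan (Real.sinh t) : ℝ) : ℂ) := by rw [hk]
    rw [← this]
    push_cast
    ring
  -- the phase derivative
  have hphase : ∀ y : ℝ, HasDerivAt (fun t : ℝ => Real.arctan (Real.sinh t))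
      ((Real.cosh y)⁻¹) y := by
    intro y
    have h := (Real.hasDerivAt_arctan (Real.sinh y)).comp y (Real.hasDerivAt_sinh y)
    refine h.congr_deriv ?_
    rw [← Real.cosh_sq']
    field_simp
  -- m : logarithmic derivative of u
  set m : ℝ → ℂ := fun t => -((Real.sinh t : ℝ) : ℂ) / ((Real.cosh t : ℝ) : ℂ)
      + k * ((Real.cosh t : ℝ) : ℂ)⁻¹ with hm
  -- u' = u * m
  have hud : ∀ y : ℝ, HasDerivAt u (u y * m y) y := by
    intro y
    have hcC : HasDerivAt (fun t : ℝ => ((Real.cosh t : ℝ) : ℂ))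
        ((Real.sinh y : ℝ) : ℂ) y := (Real.hasDerivAt_cosh y).ofReal_comp
    have hinv : HasDerivAt (fun t : ℝ => (((Real.cosh t : ℝ) : ℂ))⁻¹)
        (-((Real.sinh y : ℝ) : ℂ) / ((Real.cosh y : ℝ) : ℂ) ^ 2) y := by
      have := (hasDerivAt_const y (1 : ℂ)).div hcC (hcoshC y)
      simp only [one_div, zero_mul, one_mul, zero_sub] at this
      exact this.congr_of_eventuallyEq (Filter.Eventually.of_forall fun t => by simp)
    have hph : HasDerivAt (fun t : ℝ => k * ((Real.arctan (Real.sinh t) : ℝ) : ℂ))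
        (k * (((Real.cosh y)⁻¹ : ℝ) : ℂ)) y :=
      ((hphase y).ofReal_comp).const_mul k
    have hexp := hph.cexp
    have hmul := ((hinv.const_mul (A : ℂ)).mul hexp)
    rw [hufun]
    refine hmul.congr_deriv ?_
    have hval : (fun t : ℝ => (A : ℂ) * ((Real.cosh t : ℝ) : ℂ)⁻¹
        * Complex.exp (k * ((Real.arctan (Real.sinh t) : ℝ) : ℂ))) y
        = (A : ℂ) * ((Real.cosh y : ℝ) : ℂ)⁻¹
        * Complex.exp (k * ((Real.arctan (Real.sinh y) : ℝ) : ℂ)) := rfl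
    rw [hval, hm]
    push_cast
    field_simp
  -- deriv u = u * m
  have hderiv1 : deriv u = fun y => u y * m y := funext fun y => (hud y).deriv
  intro x
  -- derivative of m
  have hsC : HasDerivAt (fun t : ℝ => ((Real.sinh t : ℝ) : ℂ))
      ((Real.cosh x : ℝ) : ℂ) x := (Real.hasDerivAt_sinh x).ofReal_comp
  have hcC : HasDerivAt (fun t : ℝ => ((Real.cosh t : ℝ) : ℂ))
      ((Real.sinh x : ℝ) : ℂ) x := (Real.hasDerivAt_cosh x).ofReal_comp
  have hmD : HasDerivAt m
      ((-((Real.cosh x : ℝ) : ℂ) * ((Real.cosh x : ℝ) : ℂ)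
          - -((Real.sinh x : ℝ) : ℂ) * ((Real.sinh x : ℝ) : ℂ))
        / ((Real.cosh x : ℝ) : ℂ) ^ 2
        + k * (-((Real.sinh x : ℝ) : ℂ) / ((Real.cosh x : ℝ) : ℂ) ^ 2)) x := by
    have hinv : HasDerivAt (fun t : ℝ => (((Real.cosh t : ℝ) : ℂ))⁻¹)
        (-((Real.sinh x : ℝ) : ℂ) / ((Real.cosh x : ℝ) : ℂ) ^ 2) x := by
      have := (hasDerivAt_const x (1 : ℂ)).div hcC (hcoshC x)
      simp only [one_div, zero_mul, one_mul, zero_sub] at this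
      exact this.congr_of_eventuallyEq (Filter.Eventually.of_forall fun t => by simp)
    exact ((hsC.neg.div hcC (hcoshC x)).add (hinv.const_mul k))
  -- second derivative of u
  have hud2 : HasDerivAt (fun y => u y * m y)
      (u x * m x * m x + u x
        * ((-((Real.cosh x : ℝ) : ℂ) * ((Real.cosh x : ℝ) : ℂ)
              - -((Real.sinh x : ℝ) : ℂ) * ((Real.sinh x : ℝ) : ℂ))
            / ((Real.cosh x : ℝ) : ℂ) ^ 2
          + k * (-((Real.sinh x : ℝ) : ℂ) / ((Real.cosh x : ℝ) : ℂ) ^ 2))) x :=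
    (hud x).mul hmD
  have hdd : deriv (deriv u) x
      = u x * m x * m x + u x
        * ((-((Real.cosh x : ℝ) : ℂ) * ((Real.cosh x : ℝ) : ℂ)
              - -((Real.sinh x : ℝ) : ℂ) * ((Real.sinh x : ℝ) : ℂ))
            / ((Real.cosh x : ℝ) : ℂ) ^ 2
          + k * (-((Real.sinh x : ℝ) : ℂ) / ((Real.cosh x : ℝ) : ℂ) ^ 2)) := by
    rw [hderiv1]; exact hud2.deriv
  -- modulus of u
  have habs : (‖u x‖ : ℂ) ^ 2 = ((A * (1 / Real.cosh x)) ^ 2 : ℝ) := by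
    rw [hu x, norm_mul, Complex.norm_exp]
    have hre : (-Complex.I * ((W₀ : ℂ) / 3)
        * ((Real.arctan (Real.sinh x) : ℝ) : ℂ)).re = 0 := by
      have h1 : -Complex.I * ((W₀ : ℂ) / 3) * ((Real.arctan (Real.sinh x) : ℝ) : ℂ)
          = Complex.I * ((-(W₀ / 3 * Real.arctan (Real.sinh x)) : ℝ) : ℂ) := by
        push_cast; ring
      rw [h1, Complex.mul_re, Complex.I_re, Complex.I_im, Complex.ofReal_re,
        Complex.ofReal_im]
      ring
    rw [hre, Real.exp_zero, mul_one, Complex.norm_real, Real.norm_eq_abs]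
    rw [← Complex.ofReal_pow, sq_abs, Complex.ofReal_pow]
  -- value of A²
  have hA2 : (A : ℝ) ^ 2 = -(2 + V₀ + W₀ ^ 2 / 9) / g := by
    rw [hAdef]; exact Real.sq_sqrt hA.le
  -- assemble
  rw [hdd, habs]
  have hch2 : ((Real.cosh x : ℝ) : ℂ) ^ 2 = 1 + ((Real.sinh x : ℝ) : ℂ) ^ 2 := by
    exact_mod_cast Real.cosh_sq' x
  have htanh : (Real.tanh x : ℝ) = Real.sinh x / Real.cosh x :=
    Real.tanh_eq_sinh_div_cosh x
  have hgA : (g : ℂ) * ((A : ℝ) ^ 2 : ℝ) = -(2 + (V₀ : ℂ) + (W₀ : ℂ) ^ 2 / 9) := by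
    rw [hA2]
    have : (g : ℂ) ≠ 0 := by exact_mod_cast hg
    push_cast
    field_simp
  set s : ℂ := ((Real.sinh x : ℝ) : ℂ)
  set ch : ℂ := ((Real.cosh x : ℝ) : ℂ)
  have hchne : ch ≠ 0 := hcoshC x
  have hmx : m x = -s / ch + k * ch⁻¹ := rfl
  -- factor out u x
  have key : -(u x * m x * m x + u x
        * ((-ch * ch - -s * s) / ch ^ 2 + k * (-s / ch ^ 2)))
      + (((V₀ * (1 / Real.cosh x) ^ 2 : ℝ) : ℂ)
          + Complex.I * (W₀ : ℂ) * ((1 / Real.cosh x * Real.tanh x : ℝ) : ℂ)) * u x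
      + (g : ℂ) * (((A * (1 / Real.cosh x)) ^ 2 : ℝ) : ℂ) * u x + u x
      = u x * (-(m x * m x + ((-ch * ch - -s * s) / ch ^ 2 + k * (-s / ch ^ 2)))
          + ((V₀ : ℂ) * (1 / ch) ^ 2 + Complex.I * (W₀ : ℂ) * (1 / ch * (s / ch)))
          + (g : ℂ) * ((A : ℝ) ^ 2 : ℝ) * (1 / ch) ^ 2 + 1) := by
    push_cast [htanh, -Complex.ofReal_cosh, -Complex.ofReal_sinh, -Complex.ofReal_tanh]
    ring
  rw [key, hmx, hgA]
  have hnum : -2 * s ^ 2 + (3 * k + Complex.I * (W₀ : ℂ)) * s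
      - (k ^ 2 + (W₀ : ℂ) ^ 2 / 9) + 2 * ch ^ 2 - 2 = 0 := by
    rw [hk]
    linear_combination 2 * hch2 + (-(W₀ : ℂ) ^ 2 / 9) * Complex.I_sq
  have hzero : -((-s / ch + k * ch⁻¹) * (-s / ch + k * ch⁻¹)
        + ((-ch * ch - -s * s) / ch ^ 2 + k * (-s / ch ^ 2)))
      + ((V₀ : ℂ) * (1 / ch) ^ 2 + Complex.I * (W₀ : ℂ) * (1 / ch * (s / ch)))
      + -(2 + (V₀ : ℂ) + (W₀ : ℂ) ^ 2 / 9) * (1 / ch) ^ 2 + 1 = 0 := by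
    have hE : -((-s / ch + k * ch⁻¹) * (-s / ch + k * ch⁻¹)
        + ((-ch * ch - -s * s) / ch ^ 2 + k * (-s / ch ^ 2)))
      + ((V₀ : ℂ) * (1 / ch) ^ 2 + Complex.I * (W₀ : ℂ) * (1 / ch * (s / ch)))
      + -(2 + (V₀ : ℂ) + (W₀ : ℂ) ^ 2 / 9) * (1 / ch) ^ 2 + 1
        = (-2 * s ^ 2 + (3 * k + Complex.I * (W₀ : ℂ)) * s
            - (k ^ 2 + (W₀ : ℂ) ^ 2 / 9) + 2 * ch ^ 2 - 2) / ch ^ 2 := by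
      have hcc : ch ^ 10 * ch⁻¹ ^ 10 = 1 := by
        rw [← mul_pow, mul_inv_cancel₀ hchne, one_pow]
      field_simp
      linear_combination (27 * s * k + 9 * s * Complex.I * (W₀ : ℂ)
        - 9 * k ^ 2 + Complex.I ^ 2 * (W₀ : ℂ) ^ 2) * hcc
    rw [hE, hnum, zero_div]
  rw [hzero, mul_zero]
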